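/- For ν > 0 and d > 0, the function N(t) = N₀ E_ν(-d^ν t^ν), where E_ν is the Mittag-Leffler function, solves the fractional kinetic equation N(t) - N₀ = -d^ν (₀D_t^{-ν} N)(t) for all t > 0. -/

import Mathlib

open Real MeasureTheory intervalIntegral

/-- The Riemann–Liouville fractional integral `(₀D_t^{-ν} f)(t)`. -/
noncomputable def rlInt (ν : ℝ) (f : ℝ → ℝ) (t : ℝ) : ℝ :=
  (1 / Real.Gamma ν) * ∫ s in (0 : ℝ)..t, (t - s) ^ (ν - 1) * f s

/-- The one-parameter Mittag-Leffler function `E_ν(z) = ∑ z^n / Γ(νn + 1)`. -/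
noncomputable def mlE (ν z : ℝ) : ℝ := ∑' n : ℕ, z ^ n / Real.Gamma (ν * n + 1)


lemma real_beta (a b : ℝ) (ha : 0 < a) (hb : 0 < b) :
    ∫ x in (0:ℝ)..1, x ^ (a-1) * (1-x) ^ (b-1)
      = Real.Gamma a * Real.Gamma b / Real.Gamma (a+b) := by
  have key := Complex.Gamma_mul_Gamma_eq_betaIntegral (s := (a:ℂ)) (t := (b:ℂ))
    (by simpa using ha) (by simpa using hb)
  have hbeta : Complex.betaIntegral a b
      = ((∫ x in (0:ℝ)..1, x ^ (a-1) * (1-x) ^ (b-1) : ℝ) : ℂ) := by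
    rw [Complex.betaIntegral, ← intervalIntegral.integral_ofReal]
    refine intervalIntegral.integral_congr fun x hx => ?_
    rw [Set.uIcc_of_le (by norm_num : (0:ℝ) ≤ 1)] at hx
    push_cast
    rw [show ((a:ℂ)-1) = ((a-1:ℝ):ℂ) by push_cast; ring,
      show ((b:ℂ)-1) = ((b-1:ℝ):ℂ) by push_cast; ring,
      show ((1:ℂ) - (x:ℝ)) = ((1-x:ℝ):ℂ) by push_cast; ring,
      ← Complex.ofReal_cpow hx.1, ← Complex.ofReal_cpow (by linarith [hx.2])]
  have hG : Real.Gamma (a+b) ≠ 0 := (Real.Gamma_pos_of_pos (by linarith)).ne'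
  have := key
  rw [hbeta, ← Complex.ofReal_add, Complex.Gamma_ofReal, Complex.Gamma_ofReal,
    Complex.Gamma_ofReal, ← Complex.ofReal_mul, ← Complex.ofReal_mul] at this
  field_simp
  have h2 := Complex.ofReal_injective this
  linarith [h2]

lemma scaled_beta {ν μ t : ℝ} (hν : 0 < ν) (hμ : 0 ≤ μ) (ht : 0 < t) :
    ∫ s in (0:ℝ)..t, (t-s) ^ (ν-1) * s ^ μ
      = Real.Gamma ν * Real.Gamma (μ+1) / Real.Gamma (ν+μ+1) * t ^ (ν+μ) := by
  have h1 : ∫ s in (0:ℝ)..t, (t-s) ^ (ν-1) * s ^ μ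
      = t • ∫ x in (0:ℝ)..1, (t - t*x) ^ (ν-1) * (t*x) ^ μ := by
    rw [intervalIntegral.smul_integral_comp_mul_left
      (f := fun s => (t-s) ^ (ν-1) * s ^ μ) t]
    norm_num
  rw [h1]
  have h2 : ∀ x ∈ Set.uIcc (0:ℝ) 1, (t - t*x) ^ (ν-1) * (t*x) ^ μ
      = (t ^ (ν-1) * t ^ μ) * (x ^ μ * (1-x) ^ (ν-1)) := by
    intro x hx
    rw [Set.uIcc_of_le (by norm_num : (0:ℝ) ≤ 1)] at hx
    have h1x : (0:ℝ) ≤ 1 - x := by linarith [hx.2]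
    rw [show t - t*x = t * (1-x) by ring,
      Real.mul_rpow ht.le h1x, Real.mul_rpow ht.le hx.1]
    ring
  rw [intervalIntegral.integral_congr h2, intervalIntegral.integral_const_mul,
    show (∫ x in (0:ℝ)..1, x ^ μ * (1-x) ^ (ν-1)) = _ from by
      simpa using real_beta (μ+1) ν (by linarith) hν]
  rw [smul_eq_mul]
  rw [show ν + μ + 1 = μ + 1 + ν by ring]
  have : t * (t ^ (ν-1) * t ^ μ) = t ^ (ν + μ) := by
    have e1 : t ^ ((1:ℝ)+((ν-1)+μ)) = t^(1:ℝ) * t^((ν-1)+μ) := Real.rpow_add ht _ _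
    have e2 : t ^ ((ν-1)+μ) = t^(ν-1)*t^μ := Real.rpow_add ht _ _
    have e3 : ν + μ = (1:ℝ)+((ν-1)+μ) := by ring
    rw [e3, e1, e2, Real.rpow_one]
  rw [← mul_assoc, this]
  ring

lemma pow_le_fact (M : ℕ) (hM : 1 ≤ M) : ∀ k, M ^ k ≤ M ^ M * Nat.factorial k := by
  intro k
  induction k with
  | zero => simpa using Nat.one_le_pow _ _ hM
  | succ k ih =>
    rcases le_or_gt M (k+1) with h | h
    · calc M ^ (k+1) = M ^ k * M := by ring
        _ ≤ (M ^ M * Nat.factorial k) * (k+1) := Nat.mul_le_mul ih h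
        _ = M ^ M * Nat.factorial (k+1) := by rw [Nat.factorial_succ]; ring
        
    · calc M ^ (k+1) ≤ M ^ M := Nat.pow_le_pow_right (by omega) (by omega)
        _ ≤ M ^ M * Nat.factorial (k+1) := Nat.le_mul_of_pos_right _ (Nat.factorial_pos _)

/-- `Γ(νn+1) ≥ ⌊νn⌋!` when `νn ≥ 1`. -/
lemma gamma_ge_floor_fact {a : ℝ} (ha : 1 ≤ a) :
    Nat.factorial (Nat.floor a) ≤ Real.Gamma (a + 1) := by
  have h1 : (Nat.floor a : ℝ) + 1 ≤ a + 1 := by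
    have := Nat.floor_le (by linarith : (0:ℝ) ≤ a); linarith
  have h2 : (2:ℝ) ≤ (Nat.floor a : ℝ) + 1 := by
    have : 1 ≤ Nat.floor a := Nat.le_floor (by exact_mod_cast ha)
    exact_mod_cast Nat.succ_le_succ this
  have key := Real.Gamma_strictMonoOn_Ici.monotoneOn (a := ((Nat.floor a : ℝ) + 1))
    (b := a + 1) h2 (le_trans h2 h1) h1
  rwa [Real.Gamma_nat_eq_factorial] at key

lemma ml_summable {ν : ℝ} (hν : 0 < ν) {y : ℝ} (hy : 0 ≤ y) :
    Summable (fun n : ℕ => y ^ n / Real.Gamma (ν * n + 1)) := by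
  -- choose M with M ≥ 2 and (M:ℝ)^ν > y
  obtain ⟨M, hM2, hMy⟩ : ∃ M : ℕ, 2 ≤ M ∧ y < (M:ℝ) ^ ν := by
    refine ⟨max 2 ⌈(y+1) ^ (1/ν)⌉₊, le_max_left _ _, ?_⟩
    have h1 : (y+1) ^ (1/ν) ≤ (max 2 ⌈(y+1) ^ (1/ν)⌉₊ : ℕ) := by
      calc (y+1) ^ (1/ν) ≤ (⌈(y+1) ^ (1/ν)⌉₊ : ℝ) := Nat.le_ceil _
        _ ≤ _ := by exact_mod_cast Nat.cast_le.mpr (le_max_right _ _)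
    have h2 : ((y+1) ^ (1/ν)) ^ ν ≤ ((max 2 ⌈(y+1) ^ (1/ν)⌉₊ : ℕ) : ℝ) ^ ν :=
      Real.rpow_le_rpow (Real.rpow_nonneg (by linarith) _) h1 hν.le
    rw [← Real.rpow_mul (by linarith), one_div_mul_cancel hν.ne',
      Real.rpow_one] at h2
    calc y < y + 1 := by linarith
      _ ≤ _ := h2
  have hMpos : (1:ℝ) < (M:ℝ) := by exact_mod_cast hM2.trans_lt' one_lt_two |>.trans_le le_rfl
  set q : ℝ := y / (M:ℝ) ^ ν with hq
  have hMν : (0:ℝ) < (M:ℝ) ^ ν := Real.rpow_pos_of_pos (by linarith) _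
  have hq0 : 0 ≤ q := div_nonneg hy hMν.le
  have hq1 : q < 1 := (div_lt_one hMν).mpr hMy
  -- tail: pick k with ν * k ≥ 1
  obtain ⟨k, hk⟩ : ∃ k : ℕ, 1 ≤ ν * k := by
    obtain ⟨k, hk⟩ := exists_nat_ge (1/ν)
    refine ⟨k, ?_⟩
    rw [div_le_iff₀ hν] at hk
    nlinarith
  rw [← summable_nat_add_iff k]
  have hbound : ∀ n : ℕ, y ^ (n+k) / Real.Gamma (ν * ((n+k : ℕ):ℝ) + 1)
      ≤ ((M:ℝ) ^ (M+1) * q ^ k) * q ^ n := by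
    intro n
    have hνnk : (1:ℝ) ≤ ν * ((n+k : ℕ):ℝ) := by
      have : (k:ℝ) ≤ ((n+k : ℕ):ℝ) := by exact_mod_cast Nat.le_add_left k n
      nlinarith
    set a : ℝ := ν * ((n+k : ℕ):ℝ) with ha
    have hfl : (Nat.factorial (Nat.floor a) : ℝ) ≤ Real.Gamma (a + 1) := by
      exact_mod_cast gamma_ge_floor_fact hνnk
    have hpf : ((M:ℝ)) ^ (Nat.floor a) ≤ (M:ℝ) ^ M * Nat.factorial (Nat.floor a) := by
      exact_mod_cast pow_le_fact M (by omega) (Nat.floor a)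
    -- (M:ℝ)^(a-1) ≤ M^⌊a⌋
    have hfl2 : a - 1 ≤ (Nat.floor a : ℝ) := by
      have := Nat.sub_one_lt_floor a; linarith [(Nat.lt_floor_add_one a)]
    have h3 : (M:ℝ) ^ (a - 1) ≤ ((M:ℝ)) ^ (Nat.floor a : ℝ) :=
      Real.rpow_le_rpow_left_iff hMpos |>.mpr hfl2
    rw [Real.rpow_natCast] at h3
    have hGpos : 0 < Real.Gamma (a+1) := Real.Gamma_pos_of_pos (by linarith)
    have hkey : (M:ℝ) ^ (a-1) ≤ (M:ℝ) ^ M * Real.Gamma (a+1) := by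
      calc (M:ℝ) ^ (a-1) ≤ ((M:ℝ)) ^ (Nat.floor a) := h3
        _ ≤ (M:ℝ) ^ M * Nat.factorial (Nat.floor a) := hpf
        _ ≤ (M:ℝ) ^ M * Real.Gamma (a+1) := by
            have : (0:ℝ) ≤ (M:ℝ) ^ M := by positivity
            exact mul_le_mul_of_nonneg_left hfl this
    -- conclude
    have hMa : (M:ℝ) ^ (a - 1) = ((M:ℝ)^ν) ^ ((n:ℕ)+k : ℕ) / M := by
      rw [← Real.rpow_natCast ((M:ℝ)^ν), ← Real.rpow_mul (by linarith : (0:ℝ) ≤ (M:ℝ)),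
        Real.rpow_sub (by linarith), Real.rpow_one]
      try push_cast [ha]
      try ring_nf
    have h4 : y ^ (n+k) / Real.Gamma (a + 1)
        ≤ y ^ (n+k) * ((M:ℝ) ^ M * M) / ((M:ℝ)^ν) ^ (n+k) := by
      rw [div_le_div_iff₀ hGpos (by positivity)]
      have := hkey
      rw [hMa, div_le_iff₀ (by linarith : (0:ℝ) < (M:ℝ))] at this
      calc y ^ (n+k) * ((M:ℝ)^ν) ^ (n+k)
          ≤ y ^ (n+k) * ((M:ℝ) ^ M * Real.Gamma (a+1) * M) := by
            have hynn : (0:ℝ) ≤ y ^ (n+k) := by positivity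
            push_cast at this ⊢
            try exact mul_le_mul_of_nonneg_left this hynn
            try nlinarith
        _ = y ^ (n+k) * ((M:ℝ) ^ M * M) * Real.Gamma (a+1) := by ring
    calc y ^ (n+k) / Real.Gamma (ν * ((n+k : ℕ):ℝ) + 1)
        = y ^ (n+k) / Real.Gamma (a + 1) := by rw [ha]
      _ ≤ y ^ (n+k) * ((M:ℝ) ^ M * M) / ((M:ℝ)^ν) ^ (n+k) := h4
      _ = ((M:ℝ) ^ (M+1) * q ^ k) * q ^ n := by
          rw [hq, div_pow, div_pow]
          field_simp
          ring
  refine Summable.of_nonneg_of_le (fun n => ?_) hbound ?_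
  · have : 0 < Real.Gamma (ν * (n+k) + 1) := Real.Gamma_pos_of_pos (by positivity)
    positivity
  · exact (summable_geometric_of_lt_one hq0 hq1).mul_left _

lemma ml_summable_shift {ν w : ℝ} (hν : 0 < ν) (hw : 0 ≤ w) :
    Summable (fun n : ℕ => w ^ n / Real.Gamma (ν * n + ν + 1)) := by
  rcases eq_or_lt_of_le hw with h0 | hw0
  · refine (summable_nat_add_iff 1).mp ?_
    refine summable_zero.congr fun n => ?_
    have hwn : w ^ (n+1) = 0 := by rw [← h0]; simp
    simp [hwn]
  · have h := ml_summable hν hw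
    have h1 : Summable (fun n : ℕ => w ^ (n+1) / Real.Gamma (ν * ((n:ℝ)+1) + 1)) := by
      have h2 := (summable_nat_add_iff
        (f := fun n : ℕ => w ^ n / Real.Gamma (ν * n + 1)) 1).mpr h
      refine h2.congr fun n => ?_
      push_cast
      ring_nf
    refine (h1.mul_left (1/w)).congr fun n => ?_
    have e : ν * ((n:ℝ)+1) + 1 = ν * n + ν + 1 := by ring
    rw [e]
    field_simp
    ring

/-- integrability of the beta-type integrand -/
lemma beta_integrand_intervalIntegrable {ν : ℝ} (hν : 0 < ν) (n : ℕ) {t : ℝ} (ht : 0 < t) :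
    IntervalIntegrable (fun s => (t-s) ^ (ν-1) * s ^ (ν * n)) volume 0 t := by
  have h1 : IntervalIntegrable (fun s : ℝ => (t-s) ^ (ν-1)) volume 0 t := by
    have := (intervalIntegral.intervalIntegrable_rpow' (a := 0) (b := t)
      (by linarith : (-1:ℝ) < ν - 1))
    have h2 := this.comp_sub_left t
    simpa using h2.symm
  refine h1.mul_continuousOn ?_
  exact fun x _ => (Real.continuousAt_rpow_const x _
    (Or.inr (by positivity))).continuousWithinAt

theorem mittagLeffler_solves_kinetic (ν d N₀ : ℝ) (hν : 0 < ν) (hd : 0 < d)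
    (t : ℝ) (ht : 0 < t) :
    N₀ * mlE ν (-(d ^ ν) * t ^ ν) - N₀ =
      -(d ^ ν) * rlInt ν (fun s => N₀ * mlE ν (-(d ^ ν) * s ^ ν)) t := by
  set x : ℝ := d ^ ν with hx
  have hx0 : 0 < x := Real.rpow_pos_of_pos hd _
  have htν : 0 < t ^ ν := Real.rpow_pos_of_pos ht _
  set w : ℝ := x * t ^ ν with hw
  have hw0 : 0 < w := mul_pos hx0 htν
  have hΓν : 0 < Real.Gamma ν := Real.Gamma_pos_of_pos hν
  -- common term
  set A : ℕ → ℝ := fun n => N₀ * (-x) ^ (n+1) * t ^ (ν * n + ν) / Real.Gamma (ν * n + ν + 1)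
    with hA
  -- powers rewriting helper
  have hpow : ∀ (s : ℝ), 0 ≤ s → ∀ n : ℕ, (s ^ ν) ^ n = s ^ (ν * n) := by
    intro s hs n
    rw [← Real.rpow_natCast (s ^ ν) n, ← Real.rpow_mul hs]
  -- LHS
  have hLHS : N₀ * mlE ν (-x * t ^ ν) - N₀ = ∑' n : ℕ, A n := by
    have hb : Summable (fun n : ℕ => (-(x * t ^ ν)) ^ n / Real.Gamma (ν * n + 1)) := by
      refine Summable.of_abs ?_
      refine (ml_summable hν hw0.le).congr fun n => ?_
      rw [abs_div, abs_pow, abs_neg, abs_of_pos hw0,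
        abs_of_pos (Real.Gamma_pos_of_pos (by positivity))]
    have e0 : mlE ν (-x * t ^ ν) = ∑' n : ℕ, (-(x * t ^ ν)) ^ n / Real.Gamma (ν * n + 1) := by
      unfold mlE
      exact tsum_congr fun n => by ring_nf
    have hshift := hb.tsum_eq_zero_add
    norm_num [Real.Gamma_one] at hshift
    rw [e0, hshift, mul_add, mul_one, add_sub_cancel_left, ← tsum_mul_left]
    refine tsum_congr fun n => ?_
    simp only [hA]
    have e1 : (-(x * t ^ ν)) ^ (n+1) = (-x) ^ (n+1) * (t ^ ν) ^ (n+1) := by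
      rw [← mul_pow]; ring_nf
    have e2 : (t ^ ν) ^ (n+1) = t ^ (ν * n + ν) := by
      rw [hpow t ht.le (n+1)]
      congr 1
      push_cast; ring
    have e3 : ν * ((n:ℝ)+1) + 1 = ν * n + ν + 1 := by ring
    rw [e3, e1, e2]
    ring
  -- the integral
  have key : (∫ s in (0:ℝ)..t, (t - s) ^ (ν - 1) * (N₀ * mlE ν (-x * s ^ ν)))
      = ∑' n : ℕ, (N₀ * (-x) ^ n / Real.Gamma (ν * n + 1)) *
          (Real.Gamma ν * Real.Gamma (ν * n + 1) / Real.Gamma (ν + ν * n + 1) * t ^ (ν + ν * n)) := by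
    set F : ℕ → ℝ → ℝ := fun n s =>
      (N₀ * (-x) ^ n / Real.Gamma (ν * n + 1)) * ((t - s) ^ (ν - 1) * s ^ (ν * n)) with hF
    have hFint : ∀ n, Integrable (F n) (volume.restrict (Set.Ioc (0:ℝ) t)) := by
      intro n
      have := ((beta_integrand_intervalIntegrable hν n ht).const_mul
        (N₀ * (-x) ^ n / Real.Gamma (ν * n + 1)))
      rw [intervalIntegrable_iff_integrableOn_Ioc_of_le ht.le] at this
      exact this
    have hBn : ∀ n : ℕ, ∫ s in Set.Ioc (0:ℝ) t, (t - s) ^ (ν - 1) * s ^ (ν * n)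
        = Real.Gamma ν * Real.Gamma (ν * n + 1) / Real.Gamma (ν + ν * n + 1) * t ^ (ν + ν * n) := by
      intro n
      rw [← intervalIntegral.integral_of_le ht.le]
      exact scaled_beta hν (by positivity) ht
    have hnorm : Summable (fun n => ∫ s in Set.Ioc (0:ℝ) t, ‖F n s‖) := by
      have heq : ∀ n : ℕ, (∫ s in Set.Ioc (0:ℝ) t, ‖F n s‖)
          = (|N₀| * Real.Gamma ν * t ^ ν) * (w ^ n / Real.Gamma (ν * n + ν + 1)) := by
        intro n
        have h1 : ∀ s ∈ Set.Ioc (0:ℝ) t, ‖F n s‖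
            = (|N₀| * x ^ n / Real.Gamma (ν * n + 1)) * ((t - s) ^ (ν - 1) * s ^ (ν * n)) := by
          intro s hs
          have hs1 : 0 ≤ (t - s) ^ (ν - 1) := Real.rpow_nonneg (by linarith [hs.2]) _
          have hs2 : 0 ≤ s ^ (ν * n) := Real.rpow_nonneg hs.1.le _
          rw [hF]
          simp only [norm_mul, Real.norm_eq_abs, abs_div, abs_mul, abs_pow, abs_neg,
            abs_of_pos hx0, abs_of_nonneg hs1, abs_of_nonneg hs2,
            abs_of_pos (Real.Gamma_pos_of_pos (show (0:ℝ) < ν * n + 1 by positivity))]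
        rw [setIntegral_congr_fun measurableSet_Ioc h1, MeasureTheory.integral_const_mul, hBn n]
        have hGn : Real.Gamma (ν * n + 1) ≠ 0 :=
          (Real.Gamma_pos_of_pos (show (0:ℝ) < ν * n + 1 by positivity)).ne'
        have e5 : t ^ (ν + ν * n) = t ^ ν * w ^ n / x ^ n := by
          rw [Real.rpow_add ht, hw, mul_pow, hpow t ht.le n]
          field_simp
        rw [e5]
        have e6 : ν + ν * n + 1 = ν * n + ν + 1 := by ring
        rw [e6]
        field_simp
      rw [funext heq]
      exact (ml_summable_shift hν hw0.le).mul_left _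
    have hswap := MeasureTheory.integral_tsum_of_summable_integral_norm hFint hnorm
    have hptwise : ∀ s ∈ Set.Ioc (0:ℝ) t,
        (t - s) ^ (ν - 1) * (N₀ * mlE ν (-x * s ^ ν)) = ∑' n : ℕ, F n s := by
      intro s hs
      unfold mlE
      have e7 : ∀ n : ℕ, (-x * s ^ ν) ^ n / Real.Gamma (ν * n + 1)
          = (-x) ^ n * s ^ (ν * n) / Real.Gamma (ν * n + 1) := by
        intro n
        rw [mul_pow, hpow s hs.1.le n]
      rw [tsum_congr e7, ← tsum_mul_left, ← tsum_mul_left]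
      refine tsum_congr fun n => ?_
      rw [hF]
      ring
    calc (∫ s in (0:ℝ)..t, (t - s) ^ (ν - 1) * (N₀ * mlE ν (-x * s ^ ν)))
        = ∫ s in Set.Ioc (0:ℝ) t, (t - s) ^ (ν - 1) * (N₀ * mlE ν (-x * s ^ ν)) :=
          intervalIntegral.integral_of_le ht.le
      _ = ∫ s in Set.Ioc (0:ℝ) t, ∑' n : ℕ, F n s :=
          setIntegral_congr_fun measurableSet_Ioc hptwise
      _ = ∑' n : ℕ, ∫ s in Set.Ioc (0:ℝ) t, F n s := hswap.symm
      _ = _ := by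
          refine tsum_congr fun n => ?_
          rw [hF, MeasureTheory.integral_const_mul, hBn n]
  -- assemble RHS
  have hRHS : -x * rlInt ν (fun s => N₀ * mlE ν (-x * s ^ ν)) t = ∑' n : ℕ, A n := by
    rw [rlInt, key, ← tsum_mul_left, ← tsum_mul_left]
    refine tsum_congr fun n => ?_
    simp only [hA]
    have hGn : Real.Gamma (ν * n + 1) ≠ 0 :=
      (Real.Gamma_pos_of_pos (show (0:ℝ) < ν * n + 1 by positivity)).ne'
    have e6 : ν + ν * n + 1 = ν * n + ν + 1 := by ring
    have e8 : ν + ν * n = ν * n + ν := by ring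
    rw [e6, e8]
    have : (-x) ^ (n+1) = -x * (-x) ^ n := by ring
    rw [this]
    field_simp
  rw [← hx] at *
  rw [hLHS, hRHS]
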